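/- Let μ be a Radon measure on ℝ^d admitting (p,q) Fourier restriction with constant C, i.e. ‖f̂‖_{L^q(μ)} ≤ C‖f‖_{L^p(ℝ^d)} for all Schwartz functions f. Then there exists a constant M depending only on d, p, q, C such that μ(B(x,r)) ≤ M·r^{dq/p'} for all x ∈ ℝ^d and r > 0, where p' is the Hölder conjugate of p. -/

import Mathlib

open MeasureTheory Metric Filter
open scoped FourierTransform ENNReal SchwartzMap

noncomputable section

/-- `ℝ^d` as a Euclidean space. -/
abbrev Euc (d : ℕ) := EuclideanSpace ℝ (Fin d)

/-- The measure `μ` admits `(p,q)` Fourier restriction with constant `C`: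
`‖f̂‖_{L^q(μ)} ≤ C ‖f‖_{L^p(ℝ^d)}` for all Schwartz functions `f`. -/
def HasRestriction {d : ℕ} (μ : Measure (Euc d)) (p q C : ℝ) : Prop :=
  ∀ f : 𝓢(Euc d, ℂ),
    eLpNorm (𝓕 (f : Euc d → ℂ)) (ENNReal.ofReal q) μ ≤
      ENNReal.ofReal C * eLpNorm (f : Euc d → ℂ) (ENNReal.ofReal p) volume

open scoped RealInnerProductSpace Real

/-- A smooth compactly supported function as a Schwartz map. -/
def ofCS {d : ℕ} (f : Euc d → ℂ) (h1 : ContDiff ℝ ((⊤ : ℕ∞)) f) (h2 : HasCompactSupport f) :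
    𝓢(Euc d, ℂ) where
  toFun := f
  smooth' := h1
  decay' := by
    intro k n
    have hcs : HasCompactSupport (fun x : Euc d => ‖x‖ ^ k * ‖iteratedFDeriv ℝ n f x‖) :=
      HasCompactSupport.mul_left ((h2.iteratedFDeriv n).norm)
    obtain ⟨C, hC⟩ := hcs.exists_bound_of_continuous
      ((continuous_norm.pow k).mul ((h1.continuous_iteratedFDeriv (by exact_mod_cast le_top)).norm))
    exact ⟨C, fun x => (le_abs_self _).trans ((Real.norm_eq_abs _) ▸ hC x)⟩

/-- If a Radon measure `μ` on `ℝ^d` admits `(p,q)` restriction with constant `C`, then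
there is `M = M(d,p,q,C)` with `μ(B(x,r)) ≤ M r^{dq/p'}` for all `x` and `r > 0`. -/
theorem restriction_ball_growth (d : ℕ) (p q C : ℝ) (hp : 1 < p) (hq : 1 ≤ q) :
    ∃ M : ℝ, 0 < M ∧
      ∀ (μ : Measure (Euc d)), IsLocallyFiniteMeasure μ → HasRestriction μ p q C →
        ∀ (x : Euc d) (r : ℝ), 0 < r →
          μ (closedBall x r) ≤ ENNReal.ofReal (M * r ^ ((d : ℝ) * q / (p / (p - 1)))) := by
  have hp0 : (0:ℝ) < p := lt_trans one_pos hp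
  have hq0 : (0:ℝ) < q := lt_of_lt_of_le one_pos hq
  -- the bump function and its basic facts
  set φ : ContDiffBump (0 : Euc d) := ⟨1, 2, one_pos, one_lt_two⟩ with hφ
  set ψ : Euc d → ℂ := fun v => (φ v : ℂ) with hψ
  have hψs : ContDiff ℝ ((⊤ : ℕ∞)) ψ := Complex.ofRealCLM.contDiff.comp (φ.contDiff (n := ⊤))
  have hψc : HasCompactSupport ψ := φ.hasCompactSupport.comp_left (g := (fun r : ℝ => (r : ℂ))) rfl
  have hψint : Integrable ψ := hψs.continuous.integrable_of_hasCompactSupport hψc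
  set a : ℝ := ∫ v, φ v with ha_def
  have ha : 0 < a := φ.integral_pos
  have hF0 : 𝓕 ψ 0 = (a : ℂ) := by
    rw [Real.fourier_eq]
    simp [hψ]
    exact integral_ofReal
  have hFc : Continuous (𝓕 ψ) :=
    VectorFourier.fourierIntegral_continuous Real.continuous_fourierChar
      (by exact continuous_inner) hψint
  -- a lower bound for the Fourier transform of `ψ` near the origin
  obtain ⟨ε, hε, hεball⟩ : ∃ ε > 0, ∀ w : Euc d, ‖w‖ ≤ ε → a / 2 ≤ ‖𝓕 ψ w‖ := by
    have hca : ContinuousAt (fun w => ‖𝓕 ψ w‖) 0 := (hFc.norm).continuousAt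
    obtain ⟨δ, hδ, hδ2⟩ := Metric.continuousAt_iff.1 hca (a/2) (by positivity)
    refine ⟨δ/2, by positivity, fun w hw => ?_⟩
    have hd : dist w 0 < δ := by rw [dist_zero_right]; linarith
    have h2 := hδ2 hd
    rw [Real.dist_eq] at h2
    have h0 : ‖𝓕 ψ (0 : Euc d)‖ = a := by
      rw [hF0, Complex.norm_real, Real.norm_eq_abs, abs_of_pos ha]
    rw [h0] at h2
    have h3 := abs_lt.1 h2
    linarith [h3.1]
  -- Lᵖ data for ψ
  have hmem : MemLp ψ (ENNReal.ofReal p) volume :=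
    hψs.continuous.memLp_of_hasCompactSupport hψc
  set A : ℝ := (eLpNorm ψ (ENNReal.ofReal p) volume).toReal with hA_def
  have hAfin : eLpNorm ψ (ENNReal.ofReal p) volume ≠ ⊤ := hmem.eLpNorm_ne_top
  set e : ℝ := (d : ℝ) * q / (p / (p - 1)) with he_def
  have he_eq : (d : ℝ) * (1 - 1/p) * q = e := by
    rw [he_def]
    have : p - 1 ≠ 0 := by linarith
    field_simp
  set B₁ : ℝ := max C 1 * max A 1 * (2 / a) with hB₁
  have hC1 : (0:ℝ) < max C 1 := lt_of_lt_of_le one_pos (le_max_right _ _)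
  have hA1 : (0:ℝ) < max A 1 := lt_of_lt_of_le one_pos (le_max_right _ _)
  have hB₁0 : 0 < B₁ := by positivity
  refine ⟨B₁ ^ q * ε⁻¹ ^ e, by positivity, ?_⟩
  intro μ hloc hres x r hr
  set s : ℝ := r / ε with hs_def
  have hs : 0 < s := div_pos hr hε
  have hsd : (0:ℝ) < s ^ d := pow_pos hs d
  -- the rescaled modulated test function
  set g0 : Euc d → ℂ := fun v => Complex.exp ((2 * π * ⟪v, x⟫ : ℝ) * Complex.I) * ψ (s • v)
    with hg0
  have hinner : ContDiff ℝ ((⊤ : ℕ∞)) (fun v : Euc d => ⟪v, x⟫) := by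
    have h : (fun v : Euc d => ⟪v, x⟫) = fun v => ⟪x, v⟫ := funext fun v => real_inner_comm _ _
    rw [h]
    exact (innerSL ℝ x).contDiff
  have hsm : ContDiff ℝ ((⊤ : ℕ∞)) g0 := by
    rw [hg0]
    apply ContDiff.mul
    · exact Complex.contDiff_exp.comp
        ((Complex.ofRealCLM.contDiff.comp ((contDiff_const.mul hinner))).mul contDiff_const)
    · exact hψs.comp (contDiff_id.const_smul s)
  have hcs : HasCompactSupport g0 := by
    have h1 : HasCompactSupport (fun v : Euc d => ψ (s • v)) :=
      hψc.comp_homeomorph (Homeomorph.smulOfNeZero s hs.ne')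
    exact h1.mul_left
  set g : 𝓢(Euc d, ℂ) := ofCS g0 hsm hcs with hg
  have hgcoe : (g : Euc d → ℂ) = g0 := rfl
  -- the Fourier transform of g
  have key : ∀ ξ : Euc d, 𝓕 (g : Euc d → ℂ) ξ = ((s ^ d : ℝ)⁻¹ : ℝ) • 𝓕 ψ (s⁻¹ • (ξ - x)) := by
    intro ξ
    rw [hgcoe]
    rw [Real.fourier_eq']
    have hpt : (fun v : Euc d => Complex.exp (((-2 * π * ⟪v, ξ⟫ : ℝ) : ℂ) * Complex.I) • g0 v)
        = fun v => (fun u : Euc d =>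
            Complex.exp (((-2 * π * ⟪u, s⁻¹ • (ξ - x)⟫ : ℝ) : ℂ) * Complex.I) • ψ u) (s • v) := by
      funext v
      have h1 : ⟪s • v, s⁻¹ • (ξ - x)⟫ = ⟪v, ξ - x⟫ := by
        rw [real_inner_smul_left, real_inner_smul_right, ← mul_assoc, mul_inv_cancel₀ hs.ne',
          one_mul]
      simp only [hg0, smul_eq_mul, h1, inner_sub_right]
      rw [← mul_assoc, ← Complex.exp_add]
      congr 2
      push_cast
      ring
    rw [hpt]
    have hcv := MeasureTheory.Measure.integral_comp_smul (volume : Measure (Euc d))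
      (fun u : Euc d =>
        Complex.exp (((-2 * π * ⟪u, s⁻¹ • (ξ - x)⟫ : ℝ) : ℂ) * Complex.I) • ψ u) s
    rw [hcv]
    rw [finrank_euclideanSpace_fin, abs_of_pos (inv_pos.2 hsd)]
    congr 1
    rw [Real.fourier_eq']
  -- lower bound for the Fourier transform on the ball
  set c' : ℝ := (s ^ d)⁻¹ * (a / 2) with hc'
  have hc'0 : 0 < c' := by positivity
  have hlow : ∀ ξ ∈ closedBall x r, c' ≤ ‖𝓕 (g : Euc d → ℂ) ξ‖ := by
    intro ξ hξ
    rw [key ξ, norm_smul, Real.norm_eq_abs, abs_of_pos (inv_pos.2 hsd)]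
    have hball : ‖s⁻¹ • (ξ - x)‖ ≤ ε := by
      rw [norm_smul, Real.norm_eq_abs, abs_of_pos (inv_pos.2 hs)]
      have h2 : ‖ξ - x‖ ≤ r := by rwa [mem_closedBall, dist_eq_norm] at hξ
      have h3 : s⁻¹ * ‖ξ - x‖ ≤ s⁻¹ * r := by
        exact mul_le_mul_of_nonneg_left h2 (inv_pos.2 hs).le
      have h4 : s⁻¹ * r = ε := by
        rw [hs_def]
        field_simp
      linarith
    rw [hc']
    exact mul_le_mul_of_nonneg_left (hεball _ hball) (inv_pos.2 hsd).le
  -- lower bound for the q-norm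
  set Q := ENNReal.ofReal q with hQ
  set P := ENNReal.ofReal p with hP
  have hQ0 : Q ≠ 0 := by
    rw [hQ, Ne, ENNReal.ofReal_eq_zero]
    linarith
  have hQt : Q ≠ ⊤ := ENNReal.ofReal_ne_top
  have hQtoReal : Q.toReal = q := ENNReal.toReal_ofReal hq0.le
  have hind : eLpNorm ((closedBall x r).indicator (fun _ => c')) Q μ
      ≤ eLpNorm (𝓕 (g : Euc d → ℂ)) Q μ := by
    apply eLpNorm_mono
    intro ξ
    by_cases hξ : ξ ∈ closedBall x r
    · rw [Set.indicator_of_mem hξ]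
      calc ‖c'‖ = c' := by rw [Real.norm_eq_abs, abs_of_pos hc'0]
        _ ≤ ‖𝓕 (g : Euc d → ℂ) ξ‖ := hlow ξ hξ
    · simp [Set.indicator_of_notMem hξ]
  rw [eLpNorm_indicator_const measurableSet_closedBall hQ0 hQt] at hind
  -- upper bound for the p-norm of g
  have hgnorm : ∀ v, ‖(g : Euc d → ℂ) v‖ = ‖ψ (s • v)‖ := by
    intro v
    rw [hgcoe, hg0]
    simp only [norm_mul]
    rw [Complex.norm_exp_ofReal_mul_I, one_mul]
  have h1 : eLpNorm (g : Euc d → ℂ) P volume = eLpNorm (fun v => ψ (s • v)) P volume := by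
    rw [← eLpNorm_norm, ← eLpNorm_norm (fun v => ψ (s • v))]
    congr 1
    funext v
    exact hgnorm v
  have hT : MeasurableEmbedding (fun v : Euc d => s • v) :=
    (Homeomorph.smulOfNeZero s hs.ne').measurableEmbedding
  have h2 : eLpNorm (fun v => ψ (s • v)) P volume
      = eLpNorm ψ P (Measure.map (fun v : Euc d => s • v) volume) := by
    rw [eLpNorm_map_measure hψs.continuous.aestronglyMeasurable hT.measurable.aemeasurable]
    rfl
  have hmap : Measure.map (fun v : Euc d => s • v) (volume : Measure (Euc d))
      = ENNReal.ofReal ((s ^ d)⁻¹) • volume := by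
    have := MeasureTheory.Measure.map_addHaar_smul (volume : Measure (Euc d)) hs.ne'
    rw [finrank_euclideanSpace_fin] at this
    rw [show (fun v : Euc d => s • v) = (s • · : Euc d → Euc d) from rfl, this,
      abs_of_pos (inv_pos.2 hsd)]
  have h3 : eLpNorm ψ P (ENNReal.ofReal ((s ^ d)⁻¹) • volume)
      = (ENNReal.ofReal ((s ^ d)⁻¹)) ^ (1/p) * eLpNorm ψ P volume := by
    rw [eLpNorm_smul_measure_of_ne_top (by rw [hP]; exact ENNReal.ofReal_ne_top)]
    rw [smul_eq_mul]
    congr 1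
    rw [hP, one_div, ENNReal.toReal_inv, ENNReal.toReal_ofReal hp0.le, one_div]
  -- combine
  set R : ℝ := max C 1 * ((s ^ d)⁻¹) ^ (1/p) * max A 1 with hR
  have hR0 : 0 < R := by positivity
  have chain : ENNReal.ofReal c' * μ (closedBall x r) ^ (1/q) ≤ ENNReal.ofReal R := by
    have e1 : ENNReal.ofReal c' * μ (closedBall x r) ^ (1/q)
        = (‖c'‖₊ : ℝ≥0∞) * μ (closedBall x r) ^ (1 / Q.toReal) := by
      rw [hQtoReal, ← enorm_eq_nnnorm, ← ofReal_norm, Real.norm_eq_abs, abs_of_pos hc'0]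
    have e2 : eLpNorm (𝓕 (g : Euc d → ℂ)) Q μ ≤ ENNReal.ofReal C * eLpNorm (g : Euc d → ℂ) P volume :=
      hres g
    have e3 : ENNReal.ofReal C * eLpNorm (g : Euc d → ℂ) P volume
        ≤ ENNReal.ofReal R := by
      rw [h1, h2, hmap, h3]
      have hAr : eLpNorm ψ P volume = ENNReal.ofReal A := by
        rw [hA_def, hP, ENNReal.ofReal_toReal hAfin]
      rw [hAr]
      rw [ENNReal.ofReal_rpow_of_pos (inv_pos.2 hsd)]
      rw [← mul_assoc]
      rw [hR]
      rw [ENNReal.ofReal_mul (by positivity), ENNReal.ofReal_mul (by positivity)]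
      gcongr
      · exact le_max_left _ _
      · exact le_max_left _ _
    calc ENNReal.ofReal c' * μ (closedBall x r) ^ (1/q)
        = (‖c'‖₊ : ℝ≥0∞) * μ (closedBall x r) ^ (1 / Q.toReal) := e1
      _ ≤ eLpNorm (𝓕 (g : Euc d → ℂ)) Q μ := hind
      _ ≤ ENNReal.ofReal C * eLpNorm (g : Euc d → ℂ) P volume := e2
      _ ≤ ENNReal.ofReal R := e3
  have hmub : μ (closedBall x r) ^ (1/q : ℝ) ≤ ENNReal.ofReal (R / c') := by
    rw [← ENNReal.mul_le_mul_iff_right (a := ENNReal.ofReal c')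
      (by rw [Ne, ENNReal.ofReal_eq_zero]; linarith) ENNReal.ofReal_ne_top]
    calc ENNReal.ofReal c' * μ (closedBall x r) ^ (1/q : ℝ) ≤ ENNReal.ofReal R := chain
      _ = ENNReal.ofReal c' * ENNReal.ofReal (R / c') := by
          rw [← ENNReal.ofReal_mul hc'0.le, mul_comm c', div_mul_cancel₀ _ hc'0.ne']
  have hfinal : μ (closedBall x r) ≤ (ENNReal.ofReal (R / c')) ^ (q : ℝ) := by
    have h := ENNReal.rpow_le_rpow hmub hq0.le
    rwa [← ENNReal.rpow_mul, one_div, inv_mul_cancel₀ hq0.ne', ENNReal.rpow_one] at h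
  have hRc'0 : 0 < R / c' := div_pos hR0 hc'0
  -- the real computation of the constant
  have hreal : (R / c') ^ (q : ℝ) = B₁ ^ q * ε⁻¹ ^ e * r ^ e := by
    have hRc : R / c' = B₁ * (s ^ d) ^ (1 - 1/p) := by
      rw [hR, hc', hB₁]
      have hpow : (s ^ d : ℝ) ^ (1 - 1/p) = (s ^ d) / (s ^ d) ^ (1/p) := by
        rw [Real.rpow_sub hsd, Real.rpow_one]
      rw [hpow, Real.inv_rpow hsd.le]
      have hsp : (0:ℝ) < (s ^ d) ^ (1/p) := Real.rpow_pos_of_pos hsd _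
      field_simp
    rw [hRc, Real.mul_rpow hB₁0.le (Real.rpow_nonneg hsd.le _)]
    rw [mul_assoc]
    congr 1
    have hsde : ((s ^ d : ℝ) ^ (1 - 1/p)) ^ (q : ℝ) = s ^ e := by
      rw [← Real.rpow_natCast s d, ← Real.rpow_mul hs.le, ← Real.rpow_mul hs.le, ← he_eq]
    rw [hsde, hs_def, div_eq_mul_inv, Real.mul_rpow hr.le (inv_pos.2 hε).le]
    ring
  calc μ (closedBall x r) ≤ (ENNReal.ofReal (R / c')) ^ (q : ℝ) := hfinal
    _ = ENNReal.ofReal ((R / c') ^ (q : ℝ)) := by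
        rw [← ENNReal.ofReal_rpow_of_pos hRc'0]
    _ ≤ ENNReal.ofReal (B₁ ^ q * ε⁻¹ ^ e * r ^ e) := by rw [hreal]

end
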